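/- Let G be an additive abelian group, S a finite subset of G, and U a nonempty finite subset of G. Then Σ_{a,b ∈ S, a ≠ b} #((a + U) ∩ (b + U)) ≤ #U · Σ_{u ∈ (U − U) \ {0}} #(S ∩ (S + u)), where U − U = {v − w : v, w ∈ U} and S + u = {a + u : a ∈ S}. -/

import Mathlib

open Pointwise

/-- **Lemma 3.2.** Let `G` be an additive abelian group, `S` a finite subset of `G` and `U` a
nonempty finite subset of `G`. Then
`∑_{a ≠ b ∈ S} #((a + U) ∩ (b + U)) ≤ #U · ∑_{0 ≠ u ∈ U − U} #(S ∩ (S + u))`,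
where `U − U = {v − w : v, w ∈ U}` and `S + u = {a + u : a ∈ S}`. -/
theorem stmt1 {G : Type*} [AddCommGroup G] [DecidableEq G]
    (S U : Finset G) (hU : U.Nonempty) :
    ∑ a ∈ S, ∑ b ∈ S.erase a, ((U.image (a + ·)) ∩ (U.image (b + ·))).card ≤
      U.card * ∑ u ∈ (U - U).erase 0, (S ∩ (S.image (· + u))).card := by
  set T := (U - U).erase 0 with hT
  -- Step 1: pointwise bound
  have step1 : ∀ a ∈ S, ∀ b ∈ S.erase a,
      ((U.image (a + ·)) ∩ (U.image (b + ·))).card ≤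
        U.card * (if b - a ∈ T then 1 else 0) := by
    intro a _ b hb
    by_cases h : b - a ∈ T
    · simp only [h, if_true, mul_one]
      exact le_trans (Finset.card_le_card Finset.inter_subset_left) Finset.card_image_le
    · simp only [h, if_false, mul_zero, Nat.le_zero, Finset.card_eq_zero]
      rw [Finset.eq_empty_iff_forall_notMem]
      intro x hx
      rw [Finset.mem_inter, Finset.mem_image, Finset.mem_image] at hx
      obtain ⟨⟨v, hv, hxv⟩, ⟨w, hw, hxw⟩⟩ := hx
      apply h
      have hab : b ≠ a := (Finset.mem_erase.mp hb).1
      refine Finset.mem_erase.mpr ⟨sub_ne_zero.mpr hab, ?_⟩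
      rw [Finset.mem_sub]
      refine ⟨v, hv, w, hw, ?_⟩
      have h2 : a + v = b + w := hxv.trans hxw.symm
      rw [sub_eq_sub_iff_add_eq_add, add_comm v a]
      exact h2
  -- membership rewriting for the RHS sets
  have hinter : ∀ u : G, S ∩ (S.image (· + u)) = S.filter (fun b => b - u ∈ S) := by
    intro u
    ext b
    simp only [Finset.mem_inter, Finset.mem_filter, Finset.mem_image]
    constructor
    · rintro ⟨hb, a, ha, rfl⟩
      simpa using ⟨hb, ha⟩
    · rintro ⟨hb, h⟩
      exact ⟨hb, b - u, h, by abel⟩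
  -- Step 2: reindexing identity
  have step2 : ∑ a ∈ S, ∑ b ∈ S.erase a, (if b - a ∈ T then 1 else 0) =
      ∑ u ∈ T, (S ∩ (S.image (· + u))).card := by
    have h1 : ∀ a : G, ∑ b ∈ S.erase a, (if b - a ∈ T then 1 else 0) =
        ∑ b ∈ S, (if b - a ∈ T then 1 else 0) := by
      intro a
      by_cases ha : a ∈ S
      · rw [Finset.sum_erase]
        simp [hT]
      · rw [Finset.erase_eq_of_notMem ha]
    simp only [h1]
    rw [Finset.sum_comm]
    have h2 : ∀ b : G, ∑ a ∈ S, (if b - a ∈ T then 1 else 0) =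
        ∑ u ∈ T, (if b - u ∈ S then 1 else 0) := by
      intro b
      rw [← Finset.card_filter, ← Finset.card_filter]
      apply Finset.card_nbij' (fun a => b - a) (fun u => b - u)
      · intro a ha
        simp only [Finset.mem_coe, Finset.mem_filter] at ha ⊢
        exact ⟨ha.2, by simpa using ha.1⟩
      · intro u hu
        simp only [Finset.mem_coe, Finset.mem_filter] at hu ⊢
        exact ⟨hu.2, by simpa using hu.1⟩
      · intro a _; simp
      · intro u _; simp
    simp only [h2]
    rw [Finset.sum_comm]
    refine Finset.sum_congr rfl fun u _ => ?_
    rw [hinter u, Finset.card_filter]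
  calc ∑ a ∈ S, ∑ b ∈ S.erase a, ((U.image (a + ·)) ∩ (U.image (b + ·))).card
      ≤ ∑ a ∈ S, ∑ b ∈ S.erase a, U.card * (if b - a ∈ T then 1 else 0) :=
        Finset.sum_le_sum fun a ha => Finset.sum_le_sum fun b hb => step1 a ha b hb
    _ = U.card * ∑ a ∈ S, ∑ b ∈ S.erase a, (if b - a ∈ T then 1 else 0) := by
        rw [Finset.mul_sum]
        exact Finset.sum_congr rfl fun a _ => (Finset.mul_sum _ _ _).symm
    _ = U.card * ∑ u ∈ T, (S ∩ (S.image (· + u))).card := by rw [step2]
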